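/- Let Q = (V, E, s, t) be a finite quiver and let ∂ : ℝ^E → ℝ^V be the boundary map defined by ∂(∑_h A_h · h) = ∑_h A_h · (s(h) - t(h)). Then there exists an element A ∈ ℝ^E with all coordinates strictly positive and ∂(A) = 0 if and only if every edge of E is contained in some directed cycle of Q. -/

import Mathlib

open scoped BigOperators

/-- The boundary map `∂ : ℝ^E → ℝ^V` of a finite quiver, sending a generator `h`
to `s h - t h`. -/
noncomputable def bdry {V E : Type*} [Fintype E] [DecidableEq V] (s t : E → V) :
    (E → ℝ) →ₗ[ℝ] (V → ℝ) :=
  ∑ h : E, (LinearMap.proj h : (E → ℝ) →ₗ[ℝ] ℝ).smulRight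
    (fun v => (if s h = v then (1 : ℝ) else 0) - (if t h = v then (1 : ℝ) else 0))

/-- `E` is covered by cycles: every edge lies on some directed cycle. -/
def CoveredByCycles {V E : Type*} (s t : E → V) : Prop :=
  ∀ h : E, ∃ (l : ℕ) (c : Fin (l + 1) → E),
    (∀ i : Fin (l + 1), t (c i) = s (c (i + 1))) ∧ ∃ i, c i = h

lemma bdry_apply {V E : Type*} [Fintype E] [DecidableEq V] (s t : E → V) (A : E → ℝ) (v : V) :
    bdry s t A v = ∑ h : E, A h * ((if s h = v then (1 : ℝ) else 0) - (if t h = v then (1 : ℝ) else 0)) := by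
  simp [bdry, LinearMap.sum_apply, Finset.sum_apply, smul_eq_mul]

def pathSpec {V E : Type*} (s t : E → V) : V → V → List E → Prop
  | a, b, [] => a = b
  | a, b, (e :: L) => s e = a ∧ pathSpec s t (t e) b L

lemma exists_path {V E : Type*} (s t : E → V) {a b : V}
    (hab : Relation.ReflTransGen (fun x y => ∃ e, s e = x ∧ t e = y) a b) :
    ∃ L, pathSpec s t a b L := by
  induction hab using Relation.ReflTransGen.head_induction_on with
  | refl => exact ⟨[], rfl⟩
  | head hxy _ ih =>
      obtain ⟨e, he, he'⟩ := hxy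
      obtain ⟨L, hL⟩ := ih
      exact ⟨e :: L, he, he' ▸ hL⟩

lemma pathSpec_first {V E : Type*} (s t : E → V) {a b : V} {L : List E}
    (hL : pathSpec s t a b L) (h0 : 0 < L.length) : s (L.get ⟨0, h0⟩) = a := by
  cases L with
  | nil => simp at h0
  | cons e L' => exact hL.1

lemma pathSpec_chain {V E : Type*} (s t : E → V) {b : V} :
    ∀ {L : List E} {a : V}, pathSpec s t a b L → ∀ j (hj : j + 1 < L.length),
      t (L.get ⟨j, by omega⟩) = s (L.get ⟨j + 1, hj⟩) := by
  intro L
  induction L with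
  | nil => intro a _ j hj; simp at hj
  | cons e L' ih =>
      intro a hL j hj
      cases j with
      | zero =>
          have h0 : 0 < L'.length := by simpa using hj
          simpa using (pathSpec_first s t hL.2 h0).symm
      | succ k =>
          have hk : k + 1 < L'.length := by simpa using hj
          simpa using ih hL.2 k hk

lemma pathSpec_last {V E : Type*} (s t : E → V) {b : V} :
    ∀ {L : List E} {a : V}, pathSpec s t a b L → ∀ (h0 : 0 < L.length),
      t (L.get ⟨L.length - 1, by omega⟩) = b := by
  intro L
  induction L with
  | nil => intro a _ h0; simp at h0
  | cons e L' ih =>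
      intro a hL h0
      cases L' with
      | nil => simpa [pathSpec] using hL.2
      | cons f L'' =>
          have := ih hL.2 (by simp)
          simpa using this

lemma cycle_of_path {V E : Type*} (s t : E → V) (h : E) {L : List E}
    (hL : pathSpec s t (t h) (s h) L) :
    ∃ (l : ℕ) (c : Fin (l + 1) → E),
      (∀ i : Fin (l + 1), t (c i) = s (c (i + 1))) ∧ ∃ i, c i = h := by
  refine ⟨L.length, fun i => if i.val = 0 then h else L.getD (i.val - 1) h, ?_, ⟨0, by simp⟩⟩
  intro i
  rcases Nat.lt_or_ge i.val L.length with hi | hi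
  · have h1 : ((i + 1 : Fin (L.length + 1)) : ℕ) = i.val + 1 :=
      Fin.val_add_one_of_lt (by rw [Fin.lt_def, Fin.val_last]; omega)
    simp only [h1]
    rcases Nat.eq_zero_or_pos i.val with h0 | h0
    · have hlp : 0 < L.length := by omega
      have hf := pathSpec_first s t hL hlp
      simp only [h0, if_pos rfl, Nat.add_sub_cancel, if_neg (Nat.succ_ne_zero 0),
        (List.getD_eq_get _ _ ⟨0, hlp⟩ : L.getD 0 h = _), hf, if_true]
    · obtain ⟨k, hk⟩ : ∃ k, i.val = k + 1 := ⟨i.val - 1, by omega⟩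
      simp only [hk, if_neg (Nat.succ_ne_zero k), if_neg (Nat.succ_ne_zero (k+1)),
        Nat.add_sub_cancel]
      rw [List.getD_eq_getElem _ _ (by omega : k < L.length),
          List.getD_eq_getElem _ _ (by omega : k + 1 < L.length)]
      exact pathSpec_chain s t hL k (by omega)
  · have hil : i.val = L.length := by omega
    have hi0 : i = Fin.last L.length := Fin.ext (by simp [hil])
    rw [hi0, Fin.last_add_one]
    simp only [Fin.val_last, Fin.val_zero, if_pos rfl]
    rcases Nat.eq_zero_or_pos L.length with hl0 | hl0
    · have hLnil : L = [] := by rw [← List.length_eq_zero_iff]; omega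
      subst hLnil
      simpa [pathSpec] using hL
    · rw [if_neg (by omega)]
      rw [List.getD_eq_getElem _ _ (by omega : L.length - 1 < L.length)]
      exact pathSpec_last s t hL hl0

theorem stmt0 {V E : Type*} [Fintype V] [Fintype E] [DecidableEq V] (s t : E → V) :
    (∃ A : E → ℝ, (∀ h, 0 < A h) ∧ bdry s t A = 0) ↔ CoveredByCycles s t := by
  classical
  constructor
  · rintro ⟨A, hA, hAb⟩ h
    set r : V → V → Prop := fun x y => ∃ e, s e = x ∧ t e = y with hr
    set S : Finset V := Finset.univ.filter fun v => Relation.ReflTransGen r (t h) v with hS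
    have hmem : ∀ v, v ∈ S ↔ Relation.ReflTransGen r (t h) v := by
      intro v; simp [hS]
    have hclosed : ∀ e, s e ∈ S → t e ∈ S := by
      intro e he
      rw [hmem] at he ⊢
      exact he.tail ⟨e, rfl, rfl⟩
    have hth : t h ∈ S := (hmem _).mpr Relation.ReflTransGen.refl
    have key : ∑ e : E, A e * ((if s e ∈ S then (1:ℝ) else 0) - (if t e ∈ S then 1 else 0)) = 0 := by
      have hsum : ∑ v ∈ S, ∑ e : E, A e *
          ((if s e = v then (1:ℝ) else 0) - (if t e = v then 1 else 0)) = 0 := by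
        simp only [← bdry_apply s t A]
        rw [hAb]; simp
      rw [Finset.sum_comm] at hsum
      refine Eq.trans (Finset.sum_congr rfl fun e _ => ?_) hsum
      rw [← Finset.mul_sum]
      congr 1
      rw [Finset.sum_sub_distrib, Finset.sum_ite_eq, Finset.sum_ite_eq]
    have hnonpos : ∀ e ∈ Finset.univ,
        A e * ((if s e ∈ S then (1:ℝ) else 0) - (if t e ∈ S then 1 else 0)) ≤ 0 := by
      intro e _
      by_cases hs : s e ∈ S
      · rw [if_pos hs, if_pos (hclosed e hs)]
        simp
      · rw [if_neg hs]
        have : (0:ℝ) - (if t e ∈ S then 1 else 0) ≤ 0 := by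
          by_cases ht : t e ∈ S <;> simp [ht]
        exact mul_nonpos_of_nonneg_of_nonpos (hA e).le this
    have hzero := (Finset.sum_eq_zero_iff_of_nonpos hnonpos).mp key h (Finset.mem_univ h)
    have hsh : s h ∈ S := by
      by_contra hsns
      rw [if_neg hsns, if_pos hth] at hzero
      have : A h = 0 := by linarith [hzero]
      exact absurd this (ne_of_gt (hA h))
    obtain ⟨L, hL⟩ := exists_path s t ((hmem _).mp hsh)
    exact cycle_of_path s t h hL
  · intro hcov
    choose l c hc hcw using hcov
    refine ⟨fun e => ∑ h : E, ∑ i : Fin (l h + 1), if c h i = e then (1:ℝ) else 0, ?_, ?_⟩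
    · intro h
      refine Finset.sum_pos' (fun h' _ => Finset.sum_nonneg fun i _ => by positivity)
        ⟨h, Finset.mem_univ h, ?_⟩
      obtain ⟨i, hi⟩ := hcw h
      exact Finset.sum_pos' (fun j _ => by positivity)
        ⟨i, Finset.mem_univ i, by simp [hi]⟩
    · funext v
      rw [bdry_apply]
      simp only [Finset.sum_mul]
      rw [Finset.sum_comm]
      refine Finset.sum_eq_zero fun h _ => ?_
      rw [Finset.sum_comm]
      have hone : ∀ i : Fin (l h + 1),
          ∑ e : E, (if c h i = e then (1:ℝ) else 0) *
            ((if s e = v then (1:ℝ) else 0) - (if t e = v then 1 else 0)) =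
          (if s (c h i) = v then (1:ℝ) else 0) - (if t (c h i) = v then 1 else 0) := by
        intro i
        simp only [ite_mul, one_mul, zero_mul, Finset.sum_ite_eq, Finset.mem_univ, if_true]
      rw [Finset.sum_congr rfl fun i _ => hone i]
      rw [Finset.sum_sub_distrib]
      have : ∑ i : Fin (l h + 1), (if t (c h i) = v then (1:ℝ) else 0) =
          ∑ i : Fin (l h + 1), (if s (c h i) = v then (1:ℝ) else 0) := by
        refine Fintype.sum_equiv (Equiv.addRight (1 : Fin (l h + 1)))
          _ _ fun i => ?_
        rw [hc h i]
        rfl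
      rw [this, sub_self]
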